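/- Let P ⊆ ℝ^d be a finite set of n points, let a be a point in the convex hull of P, and let r be an integer with 1 ≤ r ≤ d and r ≤ n. Then there exists a subset Q ⊆ P with |Q| = r such that the Euclidean distance from a to the convex hull of Q is at most diam(P)/√(2r), where diam(P) denotes the largest Euclidean distance between two points of P. -/

import Mathlib

open Finset Metric
open scoped RealInnerProductSpace

variable {E : Type*} [NormedAddCommGroup E] [InnerProductSpace ℝ E]

/-- average argument -/
lemma exists_le_avg (s : Finset E) (w f : E → ℝ) (hw0 : ∀ i ∈ s, 0 ≤ w i)
    (hw1 : ∑ i ∈ s, w i = 1) {c : ℝ} (hsum : ∑ i ∈ s, w i * f i ≤ c) :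
    ∃ i ∈ s, f i ≤ c := by
  by_contra h
  push_neg at h
  obtain ⟨i0, hi0, hwi0⟩ : ∃ i ∈ s, 0 < w i := by
    by_contra h'
    push_neg at h'
    have : ∑ i ∈ s, w i = 0 := Finset.sum_eq_zero fun i hi => le_antisymm (h' i hi) (hw0 i hi)
    simp [this] at hw1
  have : ∑ i ∈ s, w i * c < ∑ i ∈ s, w i * f i := by
    refine Finset.sum_lt_sum (fun i hi => mul_le_mul_of_nonneg_left (h i hi).le (hw0 i hi))
      ⟨i0, hi0, by have := h i0 hi0; nlinarith⟩
  rw [← Finset.sum_mul, hw1, one_mul] at this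
  linarith

lemma sum_smul_sub_eq_zero (s : Finset E) (w : E → ℝ) (hw1 : ∑ i ∈ s, w i = 1)
    {a : E} (ha : ∑ i ∈ s, w i • i = a) : ∑ i ∈ s, w i • (i - a) = 0 := by
  simp only [smul_sub, Finset.sum_sub_distrib, ha, ← Finset.sum_smul, hw1, one_smul, sub_self]

/-- variance bound: weighted average squared distance to barycenter is at most diam²/2 -/
lemma var_bound (s : Finset E) (w : E → ℝ) (hw0 : ∀ i ∈ s, 0 ≤ w i)
    (hw1 : ∑ i ∈ s, w i = 1) {a : E} (ha : ∑ i ∈ s, w i • i = a) :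
    ∑ i ∈ s, w i * ‖i - a‖ ^ 2 ≤ Metric.diam (s : Set E) ^ 2 / 2 := by
  set σ : ℝ := ∑ i ∈ s, w i * ‖i - a‖ ^ 2 with hσ
  set D := Metric.diam (s : Set E) with hD
  have key : ∑ i ∈ s, ∑ j ∈ s, w i * w j * ‖i - j‖ ^ 2 = 2 * σ := by
    have expand : ∀ i ∈ s, ∀ j ∈ s, ‖i - j‖ ^ 2 =
        ‖i - a‖ ^ 2 - 2 * (inner ℝ (i - a) (j - a) : ℝ) + ‖j - a‖ ^ 2 := by
      intro i _ j _
      have : i - j = (i - a) - (j - a) := by abel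
      rw [this, norm_sub_sq_real]
    have inner_zero : ∀ i ∈ s, ∑ j ∈ s, w j * (inner ℝ (i - a) (j - a) : ℝ) = 0 := by
      intro i _
      have : ∑ j ∈ s, w j * (inner ℝ (i - a) (j - a) : ℝ) = (inner ℝ (i - a) (∑ j ∈ s, w j • (j - a)) : ℝ) := by
        rw [inner_sum]
        exact Finset.sum_congr rfl fun j _ => (real_inner_smul_right _ _ _).symm
      rw [this, sum_smul_sub_eq_zero s w hw1 ha, inner_zero_right]
    have step : ∀ i ∈ s, ∑ j ∈ s, w i * w j * ‖i - j‖ ^ 2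
        = w i * ‖i - a‖ ^ 2 + w i * σ := by
      intro i hi
      have hjs : ∀ j ∈ s, w i * w j * ‖i - j‖ ^ 2 =
          (w i * ‖i - a‖ ^ 2) * w j - (2 * w i) * (w j * (inner ℝ (i - a) (j - a) : ℝ))
            + w i * (w j * ‖j - a‖ ^ 2) := fun j hj => by
        rw [expand i hi j hj]; ring
      rw [Finset.sum_congr rfl hjs]
      rw [Finset.sum_add_distrib, Finset.sum_sub_distrib, ← Finset.mul_sum, ← Finset.mul_sum,
        ← Finset.mul_sum, hw1, inner_zero i hi, hσ]
      ring
    rw [Finset.sum_congr rfl step, Finset.sum_add_distrib, ← Finset.sum_mul, hw1, ← hσ]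
    ring
  have bound : ∑ i ∈ s, ∑ j ∈ s, w i * w j * ‖i - j‖ ^ 2 ≤ D ^ 2 := by
    calc ∑ i ∈ s, ∑ j ∈ s, w i * w j * ‖i - j‖ ^ 2
        ≤ ∑ i ∈ s, ∑ j ∈ s, w i * w j * D ^ 2 := by
          refine Finset.sum_le_sum fun i hi => Finset.sum_le_sum fun j hj => ?_
          have hd : ‖i - j‖ ≤ D := by
            rw [← dist_eq_norm]
            exact Metric.dist_le_diam_of_mem s.finite_toSet.isBounded (by simpa using hi)
              (by simpa using hj)
          have h0 : (0:ℝ) ≤ ‖i - j‖ := norm_nonneg _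
          exact mul_le_mul_of_nonneg_left (by nlinarith) (mul_nonneg (hw0 i hi) (hw0 j hj))
      _ = D ^ 2 := by
          simp only [← Finset.sum_mul, ← Finset.mul_sum, hw1]
          ring
  linarith [key ▸ bound]

/-- greedy approximation lemma -/
lemma greedy_step (s : Finset E) (w : E → ℝ) (hw0 : ∀ i ∈ s, 0 ≤ w i)
    (hw1 : ∑ i ∈ s, w i = 1) {a : E} (ha : ∑ i ∈ s, w i • i = a) (k : ℕ) (hk : 1 ≤ k) :
    ∃ Q : Finset E, Q ⊆ s ∧ Q.Nonempty ∧ Q.card ≤ k ∧ ∃ y ∈ convexHull ℝ (Q : Set E),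
      ‖y - a‖ ^ 2 ≤ (∑ i ∈ s, w i * ‖i - a‖ ^ 2) / k := by
  classical
  set σ : ℝ := ∑ i ∈ s, w i * ‖i - a‖ ^ 2 with hσ
  induction k with
  | zero => omega
  | succ k ih =>
    rcases Nat.eq_or_lt_of_le hk with h1 | h1
    · -- base case k+1 = 1
      obtain ⟨i, hi, hfi⟩ := exists_le_avg s w (fun i => ‖i - a‖ ^ 2) hw0 hw1 (le_refl σ)
      refine ⟨{i}, by simpa using hi, ⟨i, by simp⟩, by simp [← h1], i,
        subset_convexHull ℝ _ (by simp), ?_⟩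
      rw [← h1]
      simpa using hfi
    · have hk' : 1 ≤ k := by omega
      obtain ⟨Q, hQs, hQne, hQc, y, hy, hy2⟩ := ih hk'
      -- choose next point
      have havg : ∑ i ∈ s, w i * (2 * (k:ℝ) * (inner ℝ (y - a) (i - a) : ℝ) + ‖i - a‖ ^ 2) ≤ σ := by
        have : ∑ i ∈ s, w i * (2 * (k:ℝ) * (inner ℝ (y - a) (i - a) : ℝ) + ‖i - a‖ ^ 2)
            = 2 * k * (∑ i ∈ s, w i * (inner ℝ (y - a) (i - a) : ℝ)) + σ := by
          rw [hσ, Finset.mul_sum, ← Finset.sum_add_distrib]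
          refine Finset.sum_congr rfl fun i _ => by ring
        rw [this]
        have hz : ∑ i ∈ s, w i * (inner ℝ (y - a) (i - a) : ℝ) = 0 := by
          have : ∑ i ∈ s, w i * (inner ℝ (y - a) (i - a) : ℝ) = (inner ℝ (y - a) (∑ i ∈ s, w i • (i - a)) : ℝ) := by
            rw [inner_sum]
            exact Finset.sum_congr rfl fun i _ => (real_inner_smul_right _ _ _).symm
          rw [this, sum_smul_sub_eq_zero s w hw1 ha, inner_zero_right]
        rw [hz]; ring_nf; exact le_refl _
      obtain ⟨p, hp, hfp⟩ := exists_le_avg s w _ hw0 hw1 havg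
      set c1 : ℝ := k / (k + 1) with hc1
      set c2 : ℝ := 1 / (k + 1) with hc2
      have hkpos : (0:ℝ) < k := by exact_mod_cast hk'
      have hk1pos : (0:ℝ) < k + 1 := by positivity
      have hc1n : 0 ≤ c1 := by positivity
      have hc2n : 0 ≤ c2 := by positivity
      have hc12 : c1 + c2 = 1 := by rw [hc1, hc2]; field_simp
      refine ⟨insert p Q, Finset.insert_subset hp hQs, ⟨p, Finset.mem_insert_self _ _⟩,
        le_trans (Finset.card_insert_le _ _) (by omega),
        c1 • y + c2 • p, ?_, ?_⟩
      · have hyQ' : y ∈ convexHull ℝ ((insert p Q : Finset E) : Set E) :=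
          convexHull_mono (by simp [Finset.coe_insert, Set.subset_insert]
            ) hy
        have hpQ' : p ∈ convexHull ℝ ((insert p Q : Finset E) : Set E) :=
          subset_convexHull ℝ _ (by simp)
        exact (convex_convexHull ℝ _) hyQ' hpQ' hc1n hc2n hc12
      · -- norm computation
        have hdecomp : c1 • y + c2 • p - a = c1 • (y - a) + c2 • (p - a) := by
          rw [smul_sub, smul_sub]
          rw [show c1 • y - c1 • a + (c2 • p - c2 • a) = c1 • y + c2 • p - (c1 + c2) • a by
            rw [add_smul]; abel]
          rw [hc12, one_smul]
        rw [hdecomp]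
        have hexp : ‖c1 • (y - a) + c2 • (p - a)‖ ^ 2 =
            c1 ^ 2 * ‖y - a‖ ^ 2 + 2 * (c1 * c2) * (inner ℝ (y - a) (p - a) : ℝ)
              + c2 ^ 2 * ‖p - a‖ ^ 2 := by
          rw [norm_add_sq_real, real_inner_smul_left, real_inner_smul_right,
            norm_smul, norm_smul]
          simp [Real.norm_eq_abs, abs_of_nonneg hc1n, abs_of_nonneg hc2n]
          ring
        rw [hexp]
        have hσnn : 0 ≤ σ := Finset.sum_nonneg fun i hi =>
          mul_nonneg (hw0 i hi) (by positivity)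
        have h1 : c1 ^ 2 * ‖y - a‖ ^ 2 ≤ c1 ^ 2 * (σ / k) :=
          mul_le_mul_of_nonneg_left hy2 (by positivity)
        have h2 : 2 * (c1 * c2) * (inner ℝ (y - a) (p - a) : ℝ) + c2 ^ 2 * ‖p - a‖ ^ 2
            ≤ c2 ^ 2 * σ := by
          have hcc : c1 * c2 = c2 ^ 2 * k := by
            have hne : ((k:ℝ) + 1) ≠ 0 := by positivity
            rw [hc1, hc2]; field_simp
          have := mul_le_mul_of_nonneg_left hfp (sq_nonneg c2)
          calc 2 * (c1 * c2) * (inner ℝ (y - a) (p - a) : ℝ) + c2 ^ 2 * ‖p - a‖ ^ 2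
              = c2 ^ 2 * (2 * (k:ℝ) * (inner ℝ (y - a) (p - a) : ℝ) + ‖p - a‖ ^ 2) := by
                rw [hcc]; ring
            _ ≤ c2 ^ 2 * σ := this
        have heq : c1 ^ 2 * (σ / k) + c2 ^ 2 * σ = σ / (k + 1) := by
          rw [hc1, hc2]
          field_simp
        push_cast
        linarith

/-- Adiprasito–Bárány–Mustafa: for a finite point set `P ⊆ ℝ^d`, a point `a ∈ conv P`,
and `1 ≤ r ≤ d` with `r ≤ |P|`, there is an `r`-element subset `Q ⊆ P` whose convex hull
is within distance `diam P / √(2r)` of `a`. -/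
theorem close_caratheodory (d : ℕ) (P : Finset (EuclideanSpace ℝ (Fin d)))
    (a : EuclideanSpace ℝ (Fin d))
    (ha : a ∈ convexHull ℝ (P : Set (EuclideanSpace ℝ (Fin d))))
    (r : ℕ) (hr1 : 1 ≤ r) (hrd : r ≤ d) (hrn : r ≤ P.card) :
    ∃ Q : Finset (EuclideanSpace ℝ (Fin d)), Q ⊆ P ∧ Q.card = r ∧
      Metric.infDist a (convexHull ℝ (Q : Set (EuclideanSpace ℝ (Fin d)))) ≤
        Metric.diam (P : Set (EuclideanSpace ℝ (Fin d))) / Real.sqrt (2 * r) := by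
  rw [Finset.convexHull_eq] at ha
  obtain ⟨w, hw0, hw1, hcm⟩ := ha
  have ha' : ∑ i ∈ P, w i • i = a := by
    rw [← hcm, Finset.centerMass_eq_of_sum_1 _ _ hw1]
    rfl
  set D := Metric.diam (P : Set (EuclideanSpace ℝ (Fin d))) with hDdef
  have hDnn : 0 ≤ D := Metric.diam_nonneg
  have hσD := var_bound P w hw0 hw1 ha'
  obtain ⟨Q, hQP, hQne, hQc, y, hy, hy2⟩ := greedy_step P w hw0 hw1 ha' r hr1
  obtain ⟨Q', hQQ', hQ'P, hQ'card⟩ := Finset.exists_subsuperset_card_eq hQP hQc hrn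
  refine ⟨Q', hQ'P, hQ'card, ?_⟩
  have hrpos : (0:ℝ) < r := by exact_mod_cast hr1
  have key : ‖y - a‖ ^ 2 ≤ D ^ 2 / (2 * r) := by
    calc ‖y - a‖ ^ 2 ≤ (∑ i ∈ P, w i * ‖i - a‖ ^ 2) / r := hy2
      _ ≤ (D ^ 2 / 2) / r := by gcongr
      _ = D ^ 2 / (2 * r) := by rw [div_div]
  have hyD : ‖y - a‖ ≤ D / Real.sqrt (2 * r) := by
    have h1 : ‖y - a‖ = Real.sqrt (‖y - a‖ ^ 2) := (Real.sqrt_sq (norm_nonneg _)).symm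
    rw [h1]
    calc Real.sqrt (‖y - a‖ ^ 2) ≤ Real.sqrt (D ^ 2 / (2 * r)) := Real.sqrt_le_sqrt key
      _ = D / Real.sqrt (2 * r) := by
          rw [Real.sqrt_div (by positivity), Real.sqrt_sq hDnn]
  have hyQ' : y ∈ convexHull ℝ (Q' : Set (EuclideanSpace ℝ (Fin d))) :=
    convexHull_mono (Finset.coe_subset.2 hQQ') hy
  calc Metric.infDist a (convexHull ℝ (Q' : Set (EuclideanSpace ℝ (Fin d))))
      ≤ dist a y := Metric.infDist_le_dist_of_mem hyQ'
    _ = ‖y - a‖ := by rw [dist_eq_norm, norm_sub_rev]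
    _ ≤ D / Real.sqrt (2 * r) := hyD
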